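/- Desnanot–Jacobi identity: for an n×n matrix A over a commutative ring with n ≥ 2, det(A)·det(A_{1n,1n}) = det(A_{1,1})·det(A_{n,n}) − det(A_{1,n})·det(A_{n,1}), where A_{i,j} denotes A with row i and column j removed, and A_{1n,1n} denotes A with rows 1, n and columns 1, n removed. -/

import Mathlib

open Matrix

def djEquiv (n : ℕ) : (Fin 2 ⊕ Fin n) ≃ Fin (n + 2) where
  toFun x := Sum.elim (fun a : Fin 2 => if a = 0 then 0 else Fin.last (n + 1))
    (fun k : Fin n => Fin.castSucc (Fin.succ k)) x
  invFun i :=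
    if h : (i : ℕ) = 0 then Sum.inl 0
    else if h' : (i : ℕ) = n + 1 then Sum.inl 1
    else Sum.inr ⟨(i : ℕ) - 1, by have := i.isLt; omega⟩
  left_inv x := by
    rcases x with a | k
    · fin_cases a <;> simp [Fin.ext_iff, -Fin.val_eq_zero_iff]
    · have hk := k.isLt
      simp only [Sum.elim_inr]
      have hv : ((Fin.castSucc (Fin.succ k) : Fin (n + 2)) : ℕ) = k + 1 := rfl
      split_ifs with h1 h2
      · omega
      · simp [Fin.ext_iff, -Fin.val_eq_zero_iff]
        omega
  right_inv i := by
    dsimp only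
    split_ifs with h h'
    · simp [Fin.ext_iff, h, -Fin.val_eq_zero_iff]
    · simp only [Sum.elim_inl, if_neg (by decide : ¬(1 : Fin 2) = 0)]
      simp [Fin.ext_iff, h']
    · have := i.isLt
      simp only [Sum.elim_inr]
      simp [Fin.ext_iff]
      omega

@[simp] lemma djEquiv_inl0 (n : ℕ) : djEquiv n (Sum.inl 0) = 0 := rfl
@[simp] lemma djEquiv_inl1 (n : ℕ) : djEquiv n (Sum.inl 1) = Fin.last (n + 1) := rfl
@[simp] lemma djEquiv_inr (n : ℕ) (k : Fin n) :
    djEquiv n (Sum.inr k) = Fin.castSucc (Fin.succ k) := rfl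

lemma dj_key (R : Type*) [CommRing R] (n : ℕ) (A : Matrix (Fin (n + 2)) (Fin (n + 2)) R) :
    A.det * (adjugate A 0 0 * adjugate A (Fin.last (n + 1)) (Fin.last (n + 1))
      - adjugate A 0 (Fin.last (n + 1)) * adjugate A (Fin.last (n + 1)) 0)
    = A.det * (A.det * (A.submatrix (fun p : Fin n => Fin.castSucc (Fin.succ p))
        (fun q : Fin n => Fin.castSucc (Fin.succ q))).det) := by
  set l : Fin (n + 2) := Fin.last (n + 1) with hl
  have hl0 : l ≠ 0 := by simp [hl, Fin.ext_iff]
  set B : Matrix (Fin (n + 2)) (Fin (n + 2)) R := Matrix.of fun i j =>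
    if j = 0 then adjugate A i 0 else if j = l then adjugate A i l
    else if i = j then 1 else 0 with hBdef
  set e := djEquiv n with he
  -- determinant of B
  have hB : B.det = adjugate A 0 0 * adjugate A l l - adjugate A 0 l * adjugate A l 0 := by
    have e1 : B.submatrix e e = Matrix.fromBlocks
        (Matrix.of fun a b : Fin 2 => B (e (Sum.inl a)) (e (Sum.inl b)))
        0
        (Matrix.of fun (k : Fin n) (b : Fin 2) => B (e (Sum.inr k)) (e (Sum.inl b)))
        1 := by
      ext i j
      rcases i with a | k <;> rcases j with b | k'
      · rfl
      · have h1 : ((k' : ℕ)) ≠ n := k'.isLt.ne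
        fin_cases a <;>
          simp [hBdef, he, hl, Fin.ext_iff, Fin.val_zero, Fin.val_last, h1, h1.symm, -Fin.val_eq_zero_iff]
      · rfl
      · have h1 : ((k : ℕ)) ≠ n := k.isLt.ne
        have h2 : ((k' : ℕ)) ≠ n := k'.isLt.ne
        simp [hBdef, he, hl, Fin.ext_iff, Fin.val_zero, Fin.val_last, Matrix.one_apply,
          h1, h1.symm, h2, h2.symm, -Fin.val_eq_zero_iff]
    rw [← det_submatrix_equiv_self e B, e1, det_fromBlocks_zero₁₂, det_one, mul_one,
      det_fin_two]
    simp [hBdef, he, hl0, ← hl]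
  -- A * B
  have hm := Matrix.mul_adjugate A
  have hABeq : A * B = Matrix.of fun i j =>
      if j = 0 then A.det * (if i = (0 : Fin (n + 2)) then 1 else 0)
      else if j = l then A.det * (if i = l then 1 else 0)
      else A i j := by
    ext i j
    rw [Matrix.mul_apply]
    by_cases hj : j = 0
    · subst hj
      simp only [Matrix.of_apply, if_pos rfl]
      have hcol : ∀ k, B k (0 : Fin (n + 2)) = adjugate A k 0 := fun k => by simp [hBdef]
      simp_rw [hcol]
      rw [← Matrix.mul_apply, hm, Matrix.smul_apply, Matrix.one_apply, smul_eq_mul]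
      simp
    · by_cases hj' : j = l
      · subst hj'
        simp only [Matrix.of_apply, if_neg hj, if_pos rfl]
        have hcol : ∀ k, B k l = adjugate A k l := fun k => by simp [hBdef, hl0]
        simp_rw [hcol]
        rw [← Matrix.mul_apply, hm, Matrix.smul_apply, Matrix.one_apply, smul_eq_mul]
        simp
      · simp only [Matrix.of_apply, if_neg hj, if_neg hj']
        have hcol : ∀ k, B k j = if k = j then 1 else 0 := fun k => by simp [hBdef, hj, hj']
        simp_rw [hcol, mul_ite, mul_one, mul_zero]
        simp
  -- determinant of A * B
  have hAB : (A * B).det = A.det * (A.det * (A.submatrix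
      (fun p : Fin n => Fin.castSucc (Fin.succ p))
      (fun q : Fin n => Fin.castSucc (Fin.succ q))).det) := by
    have e2 : (A * B).submatrix e e = Matrix.fromBlocks
        (A.det • (1 : Matrix (Fin 2) (Fin 2) R))
        (Matrix.of fun (a : Fin 2) (k : Fin n) => (A * B) (e (Sum.inl a)) (e (Sum.inr k)))
        0
        (A.submatrix (fun p : Fin n => Fin.castSucc (Fin.succ p))
          (fun q : Fin n => Fin.castSucc (Fin.succ q))) := by
      ext i j
      rcases i with a | k <;> rcases j with b | k'
      · rw [hABeq]
        fin_cases a <;> fin_cases b <;>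
          simp [he, hl, Matrix.one_apply, hl0, hl0.symm, Fin.ext_iff, Fin.val_zero,
            Fin.val_last, -Fin.val_eq_zero_iff]
      · rfl
      · rw [hABeq]
        have h1 : ((k : ℕ)) ≠ n := k.isLt.ne
        fin_cases b <;>
          simp [he, hl, Fin.ext_iff, Fin.val_zero, Fin.val_last, h1, h1.symm, -Fin.val_eq_zero_iff]
      · rw [hABeq]
        have h1 : ((k : ℕ)) ≠ n := k.isLt.ne
        have h2 : ((k' : ℕ)) ≠ n := k'.isLt.ne
        simp [he, hl, Fin.ext_iff, Fin.val_zero, Fin.val_last, h1, h1.symm, h2, h2.symm, -Fin.val_eq_zero_iff]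
    rw [← det_submatrix_equiv_self e (A * B), e2, det_fromBlocks_zero₂₁, det_smul, det_one,
      mul_one]
    simp [pow_two, mul_assoc]
  calc A.det * (adjugate A 0 0 * adjugate A l l - adjugate A 0 l * adjugate A l 0)
      = A.det * B.det := by rw [hB]
    _ = (A * B).det := (det_mul A B).symm
    _ = _ := hAB


lemma dj_generic (n : ℕ) :
    letI S := MvPolynomial (Fin (n + 2) × Fin (n + 2)) ℤ
    letI G : Matrix (Fin (n + 2)) (Fin (n + 2)) S :=
      Matrix.of fun i j => MvPolynomial.X (i, j)
    G.det * (G.submatrix (fun p : Fin n => Fin.castSucc (Fin.succ p))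
          (fun q : Fin n => Fin.castSucc (Fin.succ q))).det
      = (G.submatrix (Fin.succAbove 0) (Fin.succAbove 0)).det *
          (G.submatrix (Fin.succAbove (Fin.last (n + 1)))
            (Fin.succAbove (Fin.last (n + 1)))).det
        - (G.submatrix (Fin.succAbove 0) (Fin.succAbove (Fin.last (n + 1)))).det *
            (G.submatrix (Fin.succAbove (Fin.last (n + 1))) (Fin.succAbove 0)).det := by
  set S := MvPolynomial (Fin (n + 2) × Fin (n + 2)) ℤ with hS
  set G : Matrix (Fin (n + 2)) (Fin (n + 2)) S :=
    Matrix.of fun i j => MvPolynomial.X (i, j) with hG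
  have hdet : G.det ≠ 0 := by
    intro h
    have h2 := congrArg (MvPolynomial.eval
      (fun p : Fin (n + 2) × Fin (n + 2) => if p.1 = p.2 then (1 : ℤ) else 0)) h
    rw [RingHom.map_det, map_zero] at h2
    have h3 : G.map (MvPolynomial.eval
        (fun p : Fin (n + 2) × Fin (n + 2) => if p.1 = p.2 then (1 : ℤ) else 0))
        = (1 : Matrix (Fin (n + 2)) (Fin (n + 2)) ℤ) := by
      ext i j
      simp [hG, Matrix.one_apply]
    rw [RingHom.mapMatrix_apply, h3, det_one] at h2
    exact one_ne_zero h2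
  have hkey := dj_key S n G
  have hc := mul_left_cancel₀ hdet hkey
  -- hc : adj00 * adjll - adj0l * adjl0 = G.det * inner.det
  rw [← hc]
  rw [adjugate_fin_succ_eq_det_submatrix, adjugate_fin_succ_eq_det_submatrix,
    adjugate_fin_succ_eq_det_submatrix, adjugate_fin_succ_eq_det_submatrix]
  simp only [Fin.val_zero, Fin.val_last, add_zero, zero_add, pow_zero, one_mul]
  have e1 : ((-1 : S)) ^ ((n + 1) + (n + 1)) = 1 := Even.neg_one_pow ⟨n + 1, rfl⟩
  have e2 : ((-1 : S)) ^ (n + 1) * ((-1 : S)) ^ (n + 1) = 1 := by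
    rw [← pow_add]; exact e1
  rw [e1, one_mul, mul_mul_mul_comm, e2, one_mul]
  ring

/-- Desnanot–Jacobi identity: for an `(n+2) × (n+2)` matrix `A` over a
commutative ring, `det A · det A_{1n,1n} = det A_{1,1} · det A_{n,n} − det A_{1,n} · det A_{n,1}`,
where `A_{i,j}` is `A` with row `i` and column `j` removed and `A_{1n,1n}` is `A`
with the first and last rows and columns removed. -/
theorem desnanot_jacobi
    (R : Type*) [CommRing R] (n : ℕ) (A : Matrix (Fin (n + 2)) (Fin (n + 2)) R) :
    A.det *
        (A.submatrix (fun p : Fin n => Fin.castSucc (Fin.succ p))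
          (fun q : Fin n => Fin.castSucc (Fin.succ q))).det
      = (A.submatrix (Fin.succAbove 0) (Fin.succAbove 0)).det *
          (A.submatrix (Fin.succAbove (Fin.last (n + 1)))
            (Fin.succAbove (Fin.last (n + 1)))).det
        - (A.submatrix (Fin.succAbove 0) (Fin.succAbove (Fin.last (n + 1)))).det *
            (A.submatrix (Fin.succAbove (Fin.last (n + 1))) (Fin.succAbove 0)).det := by
  set S := MvPolynomial (Fin (n + 2) × Fin (n + 2)) ℤ with hS
  set G : Matrix (Fin (n + 2)) (Fin (n + 2)) S :=
    Matrix.of fun i j => MvPolynomial.X (i, j) with hG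
  set φ : S →+* R := MvPolynomial.eval₂Hom (Int.castRingHom R) (fun p => A p.1 p.2) with hφ
  have hGA : G.map φ = A := by
    ext i j
    rw [hG, hφ]
    simp only [Matrix.map_apply, Matrix.of_apply]
    exact MvPolynomial.eval₂Hom_X' _ _ _
  have hgen := dj_generic n
  have h2 := congrArg φ hgen
  simp only [_root_.map_mul, _root_.map_sub, RingHom.map_det, RingHom.mapMatrix_apply,
    ← Matrix.submatrix_map, hGA] at h2
  rw [hG] at hGA
  rw [hGA] at h2
  exact h2
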